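/- Let a_m, b_m > 0 for m ≥ 0 satisfy: (i) a_{m+n} ≤ C a_m a_n for all m, n (sub-multiplicativity of a); (ii) b_{m+n} ≤ C b_m b_n for all m, n; (iii) c ≤ a_m b_m ≤ C for all m (two-sided comparison). Then there exist σ > 0 and constants c', C' > 0 such that c' σ^m ≤ a_m ≤ C' σ^m and c'σ^{-m} ≤ b_m ≤ C' σ^{-m} for all m ≥ 0. -/

import Mathlib

open Real


private lemma statement18_core (a b : ℕ → ℝ) (ha : ∀ m, 0 < a m) (hb : ∀ m, 0 < b m)
    (c C : ℝ) (hc : 0 < c) (hC1 : 1 ≤ C)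
    (hsuba : ∀ m n, a (m + n) ≤ C * a m * a n)
    (hsubb : ∀ m n, b (m + n) ≤ C * b m * b n)
    (hcomp : ∀ m, c ≤ a m * b m ∧ a m * b m ≤ C) :
    ∃ σ c' C' : ℝ, 0 < σ ∧ 0 < c' ∧ 0 < C' ∧
      ∀ m : ℕ, (c' * σ ^ m ≤ a m ∧ a m ≤ C' * σ ^ m) ∧
        (c' * (σ ^ m)⁻¹ ≤ b m ∧ b m ≤ C' * (σ ^ m)⁻¹) := by
  have hC : (0:ℝ) < C := lt_of_lt_of_le one_pos hC1
  have hcC : c ≤ C := le_trans (hcomp 0).1 (hcomp 0).2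
  -- b m ≤ C / a m and c / a m ≤ b m
  have hbub : ∀ m, b m ≤ C / a m := fun m =>
    (le_div_iff₀ (ha m)).mpr (by have := (hcomp m).2; nlinarith)
  have hbl : ∀ m, c / a m ≤ b m := fun m =>
    (div_le_iff₀ (ha m)).mpr (by have := (hcomp m).1; nlinarith)
  -- supermultiplicativity of a
  have hsupa : ∀ m n, c / C ^ 3 * (a m * a n) ≤ a (m + n) := by
    intro m n
    have h1 : b (m + n) ≤ C ^ 3 / (a m * a n) := by
      calc b (m + n) ≤ C * b m * b n := hsubb m n
        _ ≤ C * (C / a m) * (C / a n) := by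
            have h2 := hbub m; have h3 := hbub n
            have p1 : (0:ℝ) < C / a m := div_pos hC (ha m)
            have p2 : (0:ℝ) < C / a n := div_pos hC (ha n)
            gcongr <;> first | exact (hb _).le | exact h2 | exact h3
        _ = C ^ 3 / (a m * a n) := by
            have := (ha m).ne'; have := (ha n).ne'
            field_simp
    have h2 : c ≤ a (m + n) * b (m + n) := (hcomp _).1
    have h4 : a (m + n) * b (m + n) ≤ a (m + n) * (C ^ 3 / (a m * a n)) :=
      mul_le_mul_of_nonneg_left h1 (ha _).le
    have h5 : c ≤ a (m + n) * (C ^ 3 / (a m * a n)) := h2.trans h4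
    have hpos : (0:ℝ) < a m * a n := mul_pos (ha m) (ha n)
    rw [div_mul_eq_mul_div, div_le_iff₀ (by positivity : (0:ℝ) < C ^ 3)]
    calc c * (a m * a n) ≤ a (m + n) * (C ^ 3 / (a m * a n)) * (a m * a n) :=
          mul_le_mul_of_nonneg_right h5 hpos.le
      _ = a (m + n) * C ^ 3 := by
            have := hpos.ne'
            have := (ha m).ne'; have := (ha n).ne'
            field_simp
            try ring
  set u : ℕ → ℝ := fun m => Real.log (C * a m) with hu_def
  set v : ℕ → ℝ := fun m => Real.log (c / C ^ 3 * a m) with hv_def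
  have hCa : ∀ m, (0:ℝ) < C * a m := fun m => by have := ha m; positivity
  have hca : ∀ m, (0:ℝ) < c / C ^ 3 * a m := fun m => by have := ha m; positivity
  have hu_sub : ∀ m n, u (m + n) ≤ u m + u n := by
    intro m n
    have h : C * a (m + n) ≤ (C * a m) * (C * a n) := by
      have := hsuba m n; nlinarith [ha m, ha n, ha (m + n)]
    calc u (m + n) ≤ Real.log ((C * a m) * (C * a n)) :=
          Real.log_le_log (hCa _) h
      _ = u m + u n := Real.log_mul (hCa m).ne' (hCa n).ne'
  have hv_sup : ∀ m n, v m + v n ≤ v (m + n) := by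
    intro m n
    have h : (c / C ^ 3 * a m) * (c / C ^ 3 * a n) ≤ c / C ^ 3 * a (m + n) := by
      have h1 := hsupa m n
      have h2 : (0:ℝ) < c / C ^ 3 := by positivity
      nlinarith [ha m, ha n]
    calc v m + v n = Real.log ((c / C ^ 3 * a m) * (c / C ^ 3 * a n)) :=
          (Real.log_mul (hca m).ne' (hca n).ne').symm
      _ ≤ v (m + n) := Real.log_le_log (mul_pos (hca m) (hca n)) h
  have hvu : ∀ m, v m ≤ u m := by
    intro m
    apply Real.log_le_log (hca m)
    have h13 : (1:ℝ) ≤ C ^ 3 := one_le_pow₀ hC1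
    have h : c / C ^ 3 ≤ C := by
      rw [div_le_iff₀ (by positivity : (0:ℝ) < C ^ 3)]
      nlinarith
    nlinarith [ha m]
  -- iterated bounds
  have hun : ∀ n k : ℕ, u ((k + 1) * n) ≤ ((k : ℝ) + 1) * u n := by
    intro n k
    induction k with
    | zero => simp
    | succ k ih =>
        have h : (k + 1 + 1) * n = (k + 1) * n + n := by ring
        rw [h]
        have h2 := hu_sub ((k + 1) * n) n
        push_cast
        linarith
  have hvn : ∀ n k : ℕ, ((k : ℝ) + 1) * v n ≤ v ((k + 1) * n) := by
    intro n k
    induction k with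
    | zero => simp
    | succ k ih =>
        have h : (k + 1 + 1) * n = (k + 1) * n + n := by ring
        rw [h]
        have h2 := hv_sup ((k + 1) * n) n
        push_cast
        linarith
  have cross : ∀ m n : ℕ, v (n + 1) / (n + 1 : ℝ) ≤ u (m + 1) / (m + 1 : ℝ) := by
    intro m n
    have h1 : ((m : ℝ) + 1) * v (n + 1) ≤ v ((m + 1) * (n + 1)) := hvn (n + 1) m
    have h2 : u ((n + 1) * (m + 1)) ≤ ((n : ℝ) + 1) * u (m + 1) := hun (m + 1) n
    have h3 : v ((m + 1) * (n + 1)) ≤ u ((m + 1) * (n + 1)) := hvu _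
    have h4 : (m + 1) * (n + 1) = (n + 1) * (m + 1) := by ring
    rw [div_le_div_iff₀ (by positivity) (by positivity)]
    rw [h4] at h1 h3
    linarith
  -- the exponent
  set S : Set ℝ := Set.range (fun n : ℕ => v (n + 1) / (n + 1 : ℝ)) with hS_def
  have hS_ne : S.Nonempty := ⟨v 1 / 1, ⟨0, by norm_num⟩⟩
  have hS_bdd : BddAbove S := by
    refine ⟨u 1 / 1, ?_⟩
    rintro x ⟨n, rfl⟩
    have := cross 0 n; simpa using this
  set t : ℝ := sSup S with ht_def
  have ht_ub : ∀ n : ℕ, v (n + 1) / (n + 1 : ℝ) ≤ t := fun n =>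
    le_csSup hS_bdd ⟨n, rfl⟩
  have ht_le : ∀ m : ℕ, t ≤ u (m + 1) / (m + 1 : ℝ) := fun m =>
    csSup_le hS_ne (by rintro x ⟨n, rfl⟩; exact cross m n)
  -- u 0 ≥ 0, v 0 ≤ 0
  have hu0 : 0 ≤ u 0 := by
    have h1 := hsuba 0 0
    have h2 : 1 ≤ C * a 0 := by nlinarith [ha 0]
    exact Real.log_nonneg h2
  have hv0 : v 0 ≤ 0 := by
    have h1 := hsupa 0 0
    have h2 : c / C ^ 3 * a 0 ≤ 1 := by
      have h3 : (0:ℝ) < c / C ^ 3 := by positivity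
      nlinarith [ha 0]
    exact Real.log_nonpos (hca 0).le h2
  have hu_t : ∀ m : ℕ, (m : ℝ) * t ≤ u m := by
    intro m
    cases m with
    | zero => simpa using hu0
    | succ m =>
        have := ht_le m
        rw [le_div_iff₀ (by positivity : (0:ℝ) < (m:ℝ) + 1)] at this
        push_cast
        linarith
  have hv_t : ∀ m : ℕ, v m ≤ (m : ℝ) * t := by
    intro m
    cases m with
    | zero => simpa using hv0
    | succ m =>
        have := ht_ub m
        rw [div_le_iff₀ (by positivity : (0:ℝ) < (m:ℝ) + 1)] at this
        push_cast
        linarith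
  -- conclusion
  refine ⟨Real.exp t, c ^ 2 / C ^ 3, C ^ 3 / c, Real.exp_pos t, by positivity, by positivity, ?_⟩
  intro m
  have hpow : Real.exp t ^ m = Real.exp ((m : ℝ) * t) := (Real.exp_nat_mul t m).symm
  have ha_low : 1 / C * Real.exp t ^ m ≤ a m := by
    have h1 : Real.exp ((m : ℝ) * t) ≤ C * a m := by
      calc Real.exp ((m : ℝ) * t) ≤ Real.exp (u m) := Real.exp_le_exp.mpr (hu_t m)
        _ = C * a m := Real.exp_log (hCa m)
    rw [hpow, div_mul_eq_mul_div, div_le_iff₀ hC]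
    nlinarith
  have ha_up : a m ≤ C ^ 3 / c * Real.exp t ^ m := by
    have h1 : c / C ^ 3 * a m ≤ Real.exp ((m : ℝ) * t) := by
      calc c / C ^ 3 * a m = Real.exp (v m) := (Real.exp_log (hca m)).symm
        _ ≤ Real.exp ((m : ℝ) * t) := Real.exp_le_exp.mpr (hv_t m)
    rw [hpow]
    rw [div_mul_eq_mul_div, le_div_iff₀ hc]
    rw [div_mul_eq_mul_div, div_le_iff₀ (by positivity : (0:ℝ) < C ^ 3)] at h1
    nlinarith
  have hσ : (0:ℝ) < Real.exp t ^ m := by positivity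
  have ha_up' : c * a m ≤ C ^ 3 * Real.exp t ^ m := by
    rw [div_mul_eq_mul_div, le_div_iff₀ hc] at ha_up
    linarith
  have ha_low' : Real.exp t ^ m ≤ C * a m := by
    rw [div_mul_eq_mul_div, div_le_iff₀ hC] at ha_low
    nlinarith
  constructor
  · constructor
    · refine le_trans ?_ ha_low
      have : c ^ 2 / C ^ 3 ≤ 1 / C := by
        rw [div_le_div_iff₀ (by positivity) hC]
        nlinarith [mul_self_le_mul_self hc.le hcC]
      nlinarith
    · exact ha_up
  · constructor
    · refine le_trans ?_ (hbl m)
      rw [← div_eq_mul_inv, div_le_div_iff₀ (by positivity) (ha m),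
        div_mul_eq_mul_div, div_le_iff₀ (by positivity : (0:ℝ) < C ^ 3)]
      nlinarith [mul_le_mul_of_nonneg_left ha_up' hc.le]
    · refine le_trans (hbub m) ?_
      rw [← div_eq_mul_inv, div_le_div_iff₀ (ha m) (by positivity),
        div_mul_eq_mul_div, le_div_iff₀ hc]
      nlinarith [mul_le_mul_of_nonneg_left ha_low' (by positivity : (0:ℝ) ≤ C ^ 2),
        mul_le_mul_of_nonneg_right hcC (mul_pos hC hσ).le]



/-- The sequence-theoretic core of the conductive-homogeneity theorem: if two
positive sequences `a`, `b` are sub-multiplicative up to a constant and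
`a_m b_m` is bounded above and below by positive constants, then `a_m` is
comparable to `σ^m` and `b_m` to `σ^{-m}` for some `σ > 0`. -/
theorem statement18 (a b : ℕ → ℝ) (ha : ∀ m, 0 < a m) (hb : ∀ m, 0 < b m)
    (c C : ℝ) (hc : 0 < c) (hC : 0 < C)
    (hsuba : ∀ m n, a (m + n) ≤ C * a m * a n)
    (hsubb : ∀ m n, b (m + n) ≤ C * b m * b n)
    (hcomp : ∀ m, c ≤ a m * b m ∧ a m * b m ≤ C) :
    ∃ σ c' C' : ℝ, 0 < σ ∧ 0 < c' ∧ 0 < C' ∧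
      ∀ m : ℕ, (c' * σ ^ m ≤ a m ∧ a m ≤ C' * σ ^ m) ∧
        (c' * (σ ^ m)⁻¹ ≤ b m ∧ b m ≤ C' * (σ ^ m)⁻¹) := by
  have hD1 : (1:ℝ) ≤ max C 1 := le_max_right C 1
  have hCD : C ≤ max C 1 := le_max_left C 1
  refine statement18_core a b ha hb c (max C 1) hc hD1 ?_ ?_ ?_
  · intro m n
    refine (hsuba m n).trans ?_
    nlinarith [mul_le_mul_of_nonneg_right hCD (mul_pos (ha m) (ha n)).le]
  · intro m n
    refine (hsubb m n).trans ?_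
    nlinarith [mul_le_mul_of_nonneg_right hCD (mul_pos (hb m) (hb n)).le]
  · intro m
    exact ⟨(hcomp m).1, (hcomp m).2.trans hCD⟩
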